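/- Let G be a generalized quaternion group of order 2^k with k ≥ 3. Then the set cod(G|G') of codegrees of nonlinear irreducible characters of G has exactly one element if and only if k = 3 (i.e., G ≅ Q_8). -/

import Mathlib

open CategoryTheory

noncomputable def repKer (G : Type) [Group G] (V : FDRep ℂ G) : Subgroup G :=
  MonoidHom.ker (Representation.asGroupHom V.ρ)

noncomputable def cod (G : Type) [Group G] (V : FDRep ℂ G) : ℕ :=
  (repKer G V).index / Module.finrank ℂ V

noncomputable def ncodSet (G : Type) [Group G] : Set ℕ :=
  { n | ∃ V : FDRep ℂ G, Simple V ∧ 1 < Module.finrank ℂ V ∧ cod G V = n }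

def StarGroup (G : Type) [Group G] : Prop :=
  ∃ m n : ℕ, m ≠ n ∧ Nat.Coprime m n ∧ ncodSet G = {m, n}

structure IsFrobeniusWith (G : Type) [Group G] (N H : Subgroup G) : Prop where
  normal : N.Normal
  compl : N.IsComplement' H
  N_ne_bot : N ≠ ⊥
  H_ne_bot : H ≠ ⊥
  frob : ∀ h ∈ H, h ≠ 1 → ∀ n ∈ N, n ≠ 1 → h * n ≠ n * h

def IsFrobenius (G : Type) [Group G] : Prop :=
  ∃ N H : Subgroup G, IsFrobeniusWith G N H

def IsMinimalNormal (G : Type) [Group G] (N : Subgroup G) : Prop :=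
  N.Normal ∧ N ≠ ⊥ ∧ ∀ M : Subgroup G, M.Normal → M ≠ ⊥ → M ≤ N → M = N

def Is2FrobeniusWith (G : Type) [Group G] (K H : Subgroup G) [K.Normal] : Prop :=
  ⊥ < K ∧ K < H ∧ H < ⊤ ∧
    (∃ R : Subgroup (G ⧸ K), IsFrobeniusWith (G ⧸ K) (H.map (QuotientGroup.mk' K)) R) ∧
    (∃ J : Subgroup H, IsFrobeniusWith H (K.subgroupOf H) J)

def Is2Frobenius (G : Type) [Group G] : Prop :=
  ∃ (K H : Subgroup G) (hK : K.Normal) (_ : H.Normal), @Is2FrobeniusWith G _ K H hK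

section Aux


noncomputable section
variable {G : Type} [Group G]

/-- The subrepresentation on an invariant submodule. -/
def subRep (V : FDRep ℂ G) (p : Submodule ℂ V) (hp : ∀ g : G, ∀ v ∈ p, V.ρ g v ∈ p) :
    Representation ℂ G p where
  toFun g := (V.ρ g).restrict (fun v hv => hp g v hv)
  map_one' := by ext x; simp [LinearMap.restrict_apply]
  map_mul' g h := by ext x; simp [LinearMap.restrict_apply]

def subFDRep (V : FDRep ℂ G) (p : Submodule ℂ V) (hp : ∀ g : G, ∀ v ∈ p, V.ρ g v ∈ p) :
    FDRep ℂ G := FDRep.of (subRep V p hp)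

def subInc (V : FDRep ℂ G) (p : Submodule ℂ V) (hp : ∀ g : G, ∀ v ∈ p, V.ρ g v ∈ p) :
    subFDRep V p hp ⟶ V where
  hom := FGModuleCat.ofHom p.subtype
  comm g := by
    ext x
    rfl

theorem subInc_hom_apply (V : FDRep ℂ G) (p : Submodule ℂ V)
    (hp : ∀ g : G, ∀ v ∈ p, V.ρ g v ∈ p) (x : p) : (subInc V p hp).hom x = (x : V) := rfl

instance subInc_mono (V : FDRep ℂ G) (p : Submodule ℂ V)
    (hp : ∀ g : G, ∀ v ∈ p, V.ρ g v ∈ p) : Mono (subInc V p hp) := by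
  constructor
  intro Z u v huv
  ext x
  have := congrArg (fun (f : Z ⟶ V) => f.hom x) huv
  simp only [Action.comp_hom] at this
  exact Subtype.ext this

theorem subInc_ne_zero (V : FDRep ℂ G) (p : Submodule ℂ V)
    (hp : ∀ g : G, ∀ v ∈ p, V.ρ g v ∈ p) (hne : p ≠ ⊥) : subInc V p hp ≠ 0 := by
  intro h
  obtain ⟨x, hx, hx0⟩ := Submodule.exists_mem_ne_zero_of_ne_bot hne
  have : (subInc V p hp).hom ⟨x, hx⟩ = 0 := by rw [h]; rfl
  exact hx0 this

/-- A nonzero invariant submodule of a simple rep is everything. -/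
theorem invariant_eq_top (V : FDRep ℂ G) [Simple V] (p : Submodule ℂ V)
    (hp : ∀ g : G, ∀ v ∈ p, V.ρ g v ∈ p) (hne : p ≠ ⊥) : p = ⊤ := by
  have hiso : IsIso (subInc V p hp) :=
    (Simple.mono_isIso_iff_nonzero (subInc V p hp)).mpr (subInc_ne_zero V p hp hne)
  rw [Submodule.eq_top_iff']
  intro v
  have h1 : inv (subInc V p hp) ≫ subInc V p hp = 𝟙 V := IsIso.inv_hom_id _
  have h2 := congrArg (fun (f : V ⟶ V) => f.hom v) h1
  simp only [Action.comp_hom, Action.id_hom] at h2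
  have : (subInc V p hp).hom ((inv (subInc V p hp)).hom v) = v := h2
  rw [← this]
  exact ((inv (subInc V p hp)).hom v).2

theorem ρ_comm_apply {V W : FDRep ℂ G} (f : V ⟶ W) (g : G) (v : V) :
    f.hom (V.ρ g v) = W.ρ g (f.hom v) := by
  have := congrArg (fun (φ : V.V ⟶ W.V) => φ v) (f.comm g)
  exact this

/-- If every invariant submodule is trivial and V ≠ 0, then V is simple. -/
theorem simple_of_invariants (V : FDRep ℂ G) (hV : ∃ v : V, v ≠ 0)
    (h : ∀ p : Submodule ℂ V, (∀ g : G, ∀ v ∈ p, V.ρ g v ∈ p) → p = ⊥ ∨ p = ⊤) :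
    Simple V := by
  constructor
  intro Y f hf
  constructor
  · -- IsIso → f ≠ 0
    intro hiso h0
    obtain ⟨v, hv⟩ := hV
    have h1 : inv f ≫ f = 𝟙 V := IsIso.inv_hom_id _
    have h2 := congrArg (fun (φ : V ⟶ V) => φ.hom v) h1
    simp only [Action.comp_hom, Action.id_hom, h0, Action.zero_hom] at h2
    exact hv h2.symm
  · intro h0
    -- f injective
    have hker : LinearMap.ker f.hom.hom.hom = ⊥ := by
      by_contra hne
      have hinv : ∀ g : G, ∀ v ∈ LinearMap.ker f.hom.hom.hom, Y.ρ g v ∈ LinearMap.ker f.hom.hom.hom := by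
        intro g v hv
        rw [LinearMap.mem_ker] at hv ⊢
        exact (ρ_comm_apply f g v).trans (by change V.ρ g (f.hom.hom.hom v) = 0; rw [hv, map_zero])
      have hcomp : subInc Y _ hinv ≫ f = 0 := by
        ext x
        exact x.2
      have : subInc Y _ hinv = 0 := by
        have := hf.right_cancellation (subInc Y _ hinv) 0 (by rw [hcomp]; simp)
        exact this
      exact subInc_ne_zero Y _ hinv hne this
    -- range is invariant
    have hrinv : ∀ g : G, ∀ v ∈ LinearMap.range f.hom.hom.hom, V.ρ g v ∈ LinearMap.range f.hom.hom.hom := by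
      rintro g v ⟨y, rfl⟩
      exact ⟨Y.ρ g y, (ρ_comm_apply f g y)⟩
    have hrange : LinearMap.range f.hom.hom.hom = ⊤ := by
      rcases h _ hrinv with h' | h'
      · exfalso
        apply h0
        ext y
        have : f.hom y ∈ LinearMap.range f.hom.hom.hom := ⟨y, rfl⟩
        rw [h'] at this
        simp at this
        exact this
      · exact h'
    -- f.hom bijective, build inverse
    have hbij : Function.Bijective f.hom.hom.hom :=
      ⟨LinearMap.ker_eq_bot.mp hker, LinearMap.range_eq_top.mp hrange⟩
    let e : (Y : Type) ≃ₗ[ℂ] (V : Type) :=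
      LinearEquiv.ofBijective (f.hom.hom.hom : (Y : Type) →ₗ[ℂ] (V : Type)) hbij
    refine ⟨⟨⟨(FGModuleCat.ofHom e.symm.toLinearMap : V.V ⟶ Y.V), ?_⟩, ?_, ?_⟩⟩
    · intro g
      ext v
      apply hbij.injective
      show f.hom (e.symm (V.ρ g v)) = f.hom (Y.ρ g (e.symm v))
      rw [ρ_comm_apply f g (e.symm v)]
      have h1 : f.hom (e.symm (V.ρ g v)) = V.ρ g v := e.apply_symm_apply _
      have h2 : f.hom (e.symm v) = v := e.apply_symm_apply _
      rw [h1, h2]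
    · ext y
      exact e.symm_apply_apply y
    · ext v
      exact e.apply_symm_apply v

end

open QuaternionGroup

noncomputable section


variable (n : ℕ) [NeZero n]

instance : NeZero (2 * n) := ⟨by have := NeZero.ne n; omega⟩

def qz : ℂ := Complex.exp (2 * Real.pi * Complex.I / ((2 * n : ℕ) : ℂ))

theorem qz_prim : IsPrimitiveRoot (qz n) (2 * n) :=
  Complex.isPrimitiveRoot_exp _ (NeZero.ne _)

def ee (i : ZMod (2 * n)) : ℂ := qz n ^ i.val

theorem qz_pow_card : qz n ^ (2 * n) = 1 := (qz_prim n).pow_eq_one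

theorem qz_pow_mod (a : ℕ) : qz n ^ (a % (2 * n)) = qz n ^ a := by
  conv_rhs => rw [← Nat.div_add_mod a (2 * n)]
  rw [pow_add, pow_mul, qz_pow_card, one_pow, one_mul]

theorem ee_add (i j : ZMod (2 * n)) : ee n (i + j) = ee n i * ee n j := by
  unfold ee
  rw [ZMod.val_add, qz_pow_mod, pow_add]

theorem ee_zero : ee n 0 = 1 := by
  unfold ee
  rw [ZMod.val_zero, pow_zero]

theorem ee_eq_one_iff (i : ZMod (2 * n)) : ee n i = 1 ↔ i = 0 := by
  unfold ee
  rw [(qz_prim n).pow_eq_one_iff_dvd]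
  constructor
  · intro h
    have hlt := ZMod.val_lt i
    have hv : i.val = 0 := by
      rcases Nat.eq_zero_of_dvd_of_lt h hlt with h'
      · exact h'
    exact (ZMod.val_eq_zero i).mp hv
  · rintro rfl
    simp [ZMod.val_zero]

theorem ee_ne_zero (i : ZMod (2 * n)) : ee n i ≠ 0 := by
  unfold ee
  exact pow_ne_zero _ (Complex.exp_ne_zero _)

theorem ee_inj {i j : ZMod (2 * n)} (h : ee n i = ee n j) : i = j := by
  have h2 : ee n (i - j) * ee n j = ee n i := by rw [← ee_add]; ring_nf
  rw [h] at h2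
  have : ee n (i - j) = 1 := by
    field_simp [ee_ne_zero n j] at h2
    exact h2
  exact sub_eq_zero.mp ((ee_eq_one_iff n _).mp this)

theorem ee_congr {i j : ZMod (2 * n)} (h : i = j) : ee n i = ee n j := by rw [h]

theorem nn_zero : ((n : ZMod (2 * n)) + n) = 0 := by
  have : ((2 * n : ℕ) : ZMod (2 * n)) = 0 := ZMod.natCast_self _
  push_cast at this
  linear_combination this

/-- matrix form of the 2-dim representation with parameter `j`. -/
def qmat (j : ZMod (2 * n)) : QuaternionGroup n → Matrix (Fin 2) (Fin 2) ℂ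
  | .a i => !![ee n (j * i), 0; 0, ee n (-(j * i))]
  | .xa i => !![0, ee n (-(j * i)); ee n (j * (n + i)), 0]

def qhom (j : ZMod (2 * n)) : QuaternionGroup n →* Matrix (Fin 2) (Fin 2) ℂ where
  toFun := qmat n j
  map_one' := by
    show qmat n j (.a 0) = 1
    simp [qmat, ee_zero, Matrix.one_fin_two]
  map_mul' := by
    have hnn := nn_zero n
    rintro (i | i) (i' | i') <;>
      simp only [a_mul_a, a_mul_xa, xa_mul_a, xa_mul_xa, qmat, Matrix.mul_fin_two] <;>
      · ext r c
        fin_cases r <;> fin_cases c <;>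
          simp <;>
        first
          | rfl
          | (rw [← ee_add]; refine ee_congr n ?_; ring_nf; try linear_combination -(j * hnn))

def qrep (j : ZMod (2 * n)) : Representation ℂ (QuaternionGroup n) (Fin 2 → ℂ) :=
  ((Matrix.toLinAlgEquiv' : Matrix (Fin 2) (Fin 2) ℂ ≃ₐ[ℂ]
      ((Fin 2 → ℂ) →ₗ[ℂ] (Fin 2 → ℂ))).toAlgHom.toRingHom.toMonoidHom).comp (qhom n j)

def qV (j : ZMod (2 * n)) : FDRep ℂ (QuaternionGroup n) := FDRep.of (qrep n j)

theorem qV_ρ_apply (j : ZMod (2 * n)) (g : QuaternionGroup n) (v : Fin 2 → ℂ) :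
    (qV n j).ρ g v = (qmat n j g).mulVec v := by
  show Matrix.toLinAlgEquiv' (qhom n j g) v = _
  rw [Matrix.toLinAlgEquiv'_apply]
  rfl

theorem qV_finrank (j : ZMod (2 * n)) : Module.finrank ℂ (qV n j) = 2 :=
  Module.finrank_fin_fun ℂ

theorem basis01 (w : Fin 2 → ℂ) : w = w 0 • ![(1:ℂ),0] + w 1 • ![(0:ℂ),1] := by
  funext x
  fin_cases x <;> simp

theorem qV_invariants (j : ZMod (2 * n)) (hj : j + j ≠ 0) (p : Submodule ℂ (Fin 2 → ℂ))
    (hp : ∀ g : QuaternionGroup n, ∀ v ∈ p, (qmat n j g).mulVec v ∈ p) :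
    p = ⊥ ∨ p = ⊤ := by
  by_cases hbot : p = ⊥
  · exact Or.inl hbot
  right
  have hee : ee n j ≠ ee n (-j) := by
    intro h
    exact hj (by linear_combination (ee_inj n h))
  have he1 : (![(1:ℂ),0]) ∈ p → (![(0:ℂ),1]) ∈ p := by
    intro h1
    have h2 := hp (QuaternionGroup.xa 0) _ h1
    have heq : (qmat n j (QuaternionGroup.xa 0)).mulVec ![(1:ℂ),0]
        = ee n (j * (n + 0)) • ![(0:ℂ),1] := by
      funext x
      fin_cases x <;> simp [qmat, Matrix.mulVec, dotProduct, Fin.sum_univ_two]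
    rw [heq] at h2
    have h3 := p.smul_mem (ee n (j * (n+0)))⁻¹ h2
    rwa [inv_smul_smul₀ (ee_ne_zero n _)] at h3
  have he0 : (![(0:ℂ),1]) ∈ p → (![(1:ℂ),0]) ∈ p := by
    intro h1
    have h2 := hp (QuaternionGroup.xa 0) _ h1
    have heq : (qmat n j (QuaternionGroup.xa 0)).mulVec ![(0:ℂ),1]
        = ee n (-(j * 0)) • ![(1:ℂ),0] := by
      funext x
      fin_cases x <;> simp [qmat, Matrix.mulVec, dotProduct, Fin.sum_univ_two]
    rw [heq] at h2
    have h3 := p.smul_mem (ee n (-(j * 0)))⁻¹ h2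
    rwa [inv_smul_smul₀ (ee_ne_zero n _)] at h3
  obtain ⟨v, hvp, hvne⟩ := Submodule.exists_mem_ne_zero_of_ne_bot hbot
  have hcases : v 0 ≠ 0 ∨ v 1 ≠ 0 := by
    by_contra h
    push_neg at h
    apply hvne
    funext x
    fin_cases x
    · exact h.1
    · exact h.2
  have hgete0 : v 0 ≠ 0 → (![(1:ℂ),0]) ∈ p := by
    intro h0
    have hu : ((qmat n j (QuaternionGroup.a 1)).mulVec v - ee n (-(j * 1)) • v) ∈ p :=
      p.sub_mem (hp _ _ hvp) (p.smul_mem _ hvp)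
    have heq : (qmat n j (QuaternionGroup.a 1)).mulVec v - ee n (-(j * 1)) • v
        = ((ee n (j * 1) - ee n (-(j * 1))) * v 0) • ![(1:ℂ),0] := by
      funext x
      fin_cases x <;>
        simp [qmat, Matrix.mulVec, dotProduct, Fin.sum_univ_two] <;> ring
    rw [heq] at hu
    have hc : (ee n (j * 1) - ee n (-(j * 1))) * v 0 ≠ 0 := by
      apply mul_ne_zero _ h0
      rw [sub_ne_zero]
      simpa using hee
    have h1 := p.smul_mem ((ee n (j * 1) - ee n (-(j * 1))) * v 0)⁻¹ hu
    rwa [inv_smul_smul₀ hc] at h1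
  have hkey : (![(1:ℂ),0]) ∈ p ∧ (![(0:ℂ),1]) ∈ p := by
    by_cases h0 : v 0 ≠ 0
    · have h1 := hgete0 h0
      exact ⟨h1, he1 h1⟩
    · push_neg at h0
      have h1 : v 1 ≠ 0 := by
        rcases hcases with h | h
        · exact absurd h0 h
        · exact h
      have h2 := p.smul_mem (v 1)⁻¹ hvp
      have heq2 : (v 1)⁻¹ • v = ![(0:ℂ),1] := by
        funext x
        fin_cases x <;> simp [h0, inv_mul_cancel₀ h1]
      rw [heq2] at h2
      exact ⟨he0 h2, h2⟩
  rw [Submodule.eq_top_iff']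
  intro w
  have hw : w = w 0 • ![(1:ℂ),0] + w 1 • ![(0:ℂ),1] := by
    funext x
    fin_cases x <;> simp
  rw [hw]
  exact p.add_mem (p.smul_mem _ hkey.1) (p.smul_mem _ hkey.2)

theorem qV_simple (j : ZMod (2 * n)) (hj : j + j ≠ 0) : Simple (qV n j) := by
  apply simple_of_invariants
  · refine ⟨![(1:ℂ),0], fun h => one_ne_zero (α := ℂ) ?_⟩
    calc (1:ℂ) = ![(1:ℂ),0] 0 := by simp
      _ = (0 : Fin 2 → ℂ) 0 := congrFun h 0
      _ = 0 := rfl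
  · intro p hp
    refine qV_invariants n j hj p ?_
    intro g v hv
    exact (qV_ρ_apply n j g v) ▸ hp g v hv

end


end Aux

section Aux2
open QuaternionGroup
noncomputable section
variable (n : ℕ) [NeZero n]

theorem mem_repKer_iff {G : Type} [Group G] (V : FDRep ℂ G) (g : G) :
    g ∈ repKer G V ↔ V.ρ g = 1 := by
  unfold repKer
  rw [MonoidHom.mem_ker, Units.ext_iff]
  rw [Representation.asGroupHom_apply]
  rfl

theorem qV_mem_repKer_iff (j : ZMod (2 * n)) (g : QuaternionGroup n) :
    g ∈ repKer (QuaternionGroup n) (qV n j) ↔ qmat n j g = 1 := by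
  rw [mem_repKer_iff]
  have h1 : (qV n j).ρ g = Matrix.toLinAlgEquiv' (qmat n j g) := rfl
  rw [h1]
  constructor
  · intro h
    apply Matrix.toLinAlgEquiv'.injective
    rw [h, map_one]
    rfl
  · intro h
    rw [h, map_one]
    rfl

theorem qV_mem_ker_a (j i : ZMod (2 * n)) :
    QuaternionGroup.a i ∈ repKer (QuaternionGroup n) (qV n j) ↔ j * i = 0 := by
  rw [qV_mem_repKer_iff]
  constructor
  · intro h
    have h0 := congrFun (congrFun h 0) 0
    simp [qmat, Matrix.one_apply_eq] at h0
    exact (ee_eq_one_iff n _).mp h0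
  · intro h
    show !![ee n (j * i), 0; 0, ee n (-(j * i))] = 1
    rw [h, neg_zero, ee_zero, Matrix.one_fin_two]

theorem qV_xa_not_ker (j i : ZMod (2 * n)) :
    QuaternionGroup.xa i ∉ repKer (QuaternionGroup n) (qV n j) := by
  rw [qV_mem_repKer_iff]
  intro h
  have h0 := congrFun (congrFun h 0) 0
  simp [qmat, Matrix.one_apply_eq] at h0

theorem qV_ker_one : repKer (QuaternionGroup n) (qV n 1) = ⊥ := by
  ext g
  rw [Subgroup.mem_bot]
  rcases g with i | i
  · rw [qV_mem_ker_a, one_mul]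
    constructor
    · rintro rfl; rfl
    · intro h
      rw [one_def] at h
      exact (QuaternionGroup.a.injEq _ _).mp h
  · constructor
    · intro h
      exact absurd h (qV_xa_not_ker n 1 i)
    · intro h
      rw [one_def] at h
      cases h

theorem two_mul_eq_zero_iff (i : ZMod (2 * n)) :
    2 * i = 0 ↔ i = 0 ∨ i = (n : ZMod (2 * n)) := by
  have hi : ((i.val : ℕ) : ZMod (2 * n)) = i := ZMod.natCast_rightInverse i
  have hcast : 2 * i = ((2 * i.val : ℕ) : ZMod (2 * n)) := by
    push_cast [hi]
    ring
  rw [hcast, ZMod.natCast_eq_zero_iff]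
  have hdvd : 2 * n ∣ 2 * i.val ↔ n ∣ i.val := mul_dvd_mul_iff_left (by norm_num)
  rw [hdvd]
  constructor
  · rintro ⟨c, hc⟩
    have hlt := ZMod.val_lt i
    have hc2 : c < 2 := by
      by_contra hcc
      push_neg at hcc
      have : 2 * n ≤ n * c := by
        calc 2 * n = n * 2 := by ring
        _ ≤ n * c := Nat.mul_le_mul_left n hcc
      omega
    interval_cases c
    · left
      rw [← hi]
      simp [hc]
    · right
      rw [← hi, hc]
      simp
  · rintro (rfl | rfl)
    · exact ⟨0, by simp⟩
    · rw [ZMod.val_cast_of_lt (by have := NeZero.ne n; omega)]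

theorem qV_ker_two :
    repKer (QuaternionGroup n) (qV n 2)
      = Subgroup.zpowers (QuaternionGroup.a (n : ZMod (2 * n))) := by
  apply le_antisymm
  · intro g hg
    rcases g with i | i
    · rw [qV_mem_ker_a] at hg
      rcases (two_mul_eq_zero_iff n i).mp hg with rfl | rfl
      · exact Subgroup.one_mem _
      · exact Subgroup.mem_zpowers _
    · exact absurd hg (qV_xa_not_ker n 2 i)
  · rw [Subgroup.zpowers_le]
    rw [qV_mem_ker_a]
    have : ((2 * n : ℕ) : ZMod (2 * n)) = 0 := ZMod.natCast_self _
    push_cast at this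
    linear_combination this

theorem cod_qV_one : cod (QuaternionGroup n) (qV n 1) = 2 * n := by
  unfold cod
  rw [qV_ker_one, Subgroup.index_bot, Nat.card_eq_fintype_card, QuaternionGroup.card, qV_finrank]
  omega

theorem cod_qV_two : cod (QuaternionGroup n) (qV n 2) = n := by
  unfold cod
  rw [qV_finrank]
  have hcard : Nat.card (repKer (QuaternionGroup n) (qV n 2)) = 2 := by
    rw [qV_ker_two, Nat.card_zpowers, QuaternionGroup.orderOf_a,
      ZMod.val_cast_of_lt (show n < 2 * n by have := NeZero.ne n; omega)]
    have hgcd : Nat.gcd (2 * n) n = n := by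
      have h := Nat.gcd_mul_right 2 1 n
      simpa using h
    rw [hgcd]
    exact Nat.mul_div_cancel 2 (Nat.pos_of_ne_zero (NeZero.ne n))
  have hidx := Subgroup.card_mul_index (repKer (QuaternionGroup n) (qV n 2))
  rw [hcard, Nat.card_eq_fintype_card, QuaternionGroup.card] at hidx
  omega

theorem twoN_mem_ncodSet (h1 : (1 : ZMod (2 * n)) + 1 ≠ 0) :
    2 * n ∈ ncodSet (QuaternionGroup n) :=
  ⟨qV n 1, qV_simple n 1 h1, by rw [qV_finrank]; norm_num, cod_qV_one n⟩

theorem n_mem_ncodSet (h1 : (2 : ZMod (2 * n)) + 2 ≠ 0) :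
    n ∈ ncodSet (QuaternionGroup n) :=
  ⟨qV n 2, qV_simple n 2 h1, by rw [qV_finrank]; norm_num, cod_qV_two n⟩

end

noncomputable section Q8

open QuaternionGroup

abbrev Q8 := QuaternionGroup 2

theorem q8_rho_not_one (V : FDRep ℂ Q8) [Simple V] (hd : 1 < Module.finrank ℂ V) :
    V.ρ (QuaternionGroup.a 2) ≠ 1 := by
  intro hz1
  have hz2 : ∀ m : ZMod (2 * 2), V.ρ (QuaternionGroup.a (m + m)) = 1 := by
    intro m
    have h : m + m = 0 ∨ m + m = 2 := by revert m; decide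
    rcases h with h | h
    · rw [h, ← one_def, map_one]
    · rw [h]; exact hz1
  have hcomm : ∀ g h : Q8, V.ρ g * V.ρ h = V.ρ h * V.ρ g := by
    intro g h
    rw [← map_mul, ← map_mul]
    rcases g with i | i <;> rcases h with i' | i'
    · rw [a_mul_a, a_mul_a, add_comm]
    · have he : QuaternionGroup.xa (i' + i) =
          QuaternionGroup.xa (i' - i) * QuaternionGroup.a (i + i) := by
        rw [xa_mul_a]; congr 1; ring
      rw [a_mul_xa, xa_mul_a, he, map_mul, hz2, mul_one]
    · have he : QuaternionGroup.xa (i + i') =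
          QuaternionGroup.xa (i - i') * QuaternionGroup.a (i' + i') := by
        rw [xa_mul_a]; congr 1; ring
      rw [a_mul_xa, xa_mul_a, he, map_mul, hz2, mul_one]
    · have he : QuaternionGroup.a (((2:ℕ) : ZMod (2 * 2)) + i' - i) =
          QuaternionGroup.a (((2:ℕ) : ZMod (2 * 2)) + i - i') *
            QuaternionGroup.a ((i' - i) + (i' - i)) := by
        rw [a_mul_a]; congr 1; ring
      rw [xa_mul_xa, xa_mul_xa, he, map_mul, hz2, mul_one]
  -- each ρ g is an endomorphism of V in FDRep
  have hhom : ∀ g : Q8, ∃ f : V ⟶ V, f.hom.hom.hom = V.ρ g := by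
    intro g
    refine ⟨⟨(FGModuleCat.ofHom (V.ρ g) : V.V ⟶ V.V), fun h => ?_⟩, rfl⟩
    ext v
    exact LinearMap.congr_fun (hcomm g h) v
  have hnt : Nontrivial V := by
    rw [← Module.finrank_pos_iff (R := ℂ)]
    omega
  obtain ⟨v, hv⟩ := exists_ne (0 : V)
  have hid : (𝟙 V : V ⟶ V) ≠ 0 := by
    intro h
    apply hv
    have := congrArg (fun (f : V ⟶ V) => f.hom v) h
    exact this
  have hrank1 : Module.finrank ℂ (V ⟶ V) = 1 := by
    rw [FDRep.finrank_hom_simple_simple V V, if_pos ⟨Iso.refl V⟩]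
  have hspan := (finrank_eq_one_iff_of_nonzero' (𝟙 V) hid).mp hrank1
  -- every ρ g is a scalar
  have hscal : ∀ g : Q8, ∃ c : ℂ, ∀ w : V, V.ρ g w = c • w := by
    intro g
    obtain ⟨f, hf⟩ := hhom g
    obtain ⟨c, hc⟩ := hspan f
    refine ⟨c, fun w => ?_⟩
    have := congrArg (fun (f : V ⟶ V) => f.hom w) hc
    rw [← hf]
    exact this.symm
  -- span of v is invariant
  have hinv : ∀ g : Q8, ∀ w ∈ Submodule.span ℂ {v}, V.ρ g w ∈ Submodule.span ℂ {v} := by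
    intro g w hw
    obtain ⟨c, hc⟩ := hscal g
    rw [hc]
    exact Submodule.smul_mem _ _ hw
  have htop := invariant_eq_top V (Submodule.span ℂ {v}) hinv
    (by rwa [ne_eq, Submodule.span_singleton_eq_bot])
  have h1 : Module.finrank ℂ V = 1 := by
    rw [← finrank_top ℂ V, ← htop]
    exact finrank_span_singleton hv
  omega

end Q8

noncomputable section Q8b
open QuaternionGroup

theorem q8_finrank_eq_two (V : FDRep ℂ Q8) [Simple V] (hd : 1 < Module.finrank ℂ V) :
    Module.finrank ℂ V = 2 := by
  have hnt : Nontrivial V := by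
    rw [← Module.finrank_pos_iff (R := ℂ)]
    omega
  set A := V.ρ (QuaternionGroup.a 1) with hA
  set A' := V.ρ (QuaternionGroup.a (-1)) with hA'
  set B := V.ρ (QuaternionGroup.xa 0) with hB
  have hA'A : ∀ w : V, A' (A w) = w := by
    intro w
    have h : A' * A = 1 := by
      rw [hA, hA', ← map_mul, a_mul_a]
      norm_num
    exact LinearMap.congr_fun h w
  have hAB : ∀ w : V, A (B w) = B (A' w) := by
    intro w
    have h : A * B = B * A' := by
      rw [hA, hA', hB, ← map_mul, ← map_mul, a_mul_xa, xa_mul_a]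
      norm_num
    exact LinearMap.congr_fun h w
  have hA'B : ∀ w : V, A' (B w) = B (A w) := by
    intro w
    have h : A' * B = B * A := by
      rw [hA, hA', hB, ← map_mul, ← map_mul, a_mul_xa, xa_mul_a]
      norm_num
    exact LinearMap.congr_fun h w
  have hBB : ∀ w : V, B (B w) = A (A w) := by
    intro w
    have h : B * B = A * A := by
      rw [hA, hB, ← map_mul, ← map_mul, xa_mul_xa, a_mul_a]
      norm_num
    exact LinearMap.congr_fun h w
  obtain ⟨μ, hμ⟩ := Module.End.exists_eigenvalue (A : Module.End ℂ V)
  obtain ⟨v, hv⟩ := hμ.exists_hasEigenvector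
  have hvne : v ≠ 0 := hv.right
  have hAv : A v = μ • v := hv.apply_eq_smul
  have hμ0 : μ ≠ 0 := by
    intro h
    apply hvne
    have := hA'A v
    rw [hAv, h, zero_smul, map_zero] at this
    exact this.symm
  have hA'v : A' v = μ⁻¹ • v := by
    have h1 : μ • A' v = v := by
      rw [← map_smul, ← hAv, hA'A]
    have h2 : μ⁻¹ • (μ • A' v) = μ⁻¹ • v := by rw [h1]
    rwa [smul_smul, inv_mul_cancel₀ hμ0, one_smul] at h2
  set p := Submodule.span ℂ ({v, B v} : Set V) with hp
  have hvmem : v ∈ p := Submodule.subset_span (Set.mem_insert _ _)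
  have hBvmem : B v ∈ p := Submodule.subset_span (Set.mem_insert_of_mem _ rfl)
  have hA_p : ∀ w ∈ p, A w ∈ p := by
    intro w hw
    induction hw using Submodule.span_induction with
    | mem x hx =>
      rcases hx with rfl | rfl
      · rw [hAv]; exact p.smul_mem _ hvmem
      · rw [hAB, hA'v, map_smul]
        exact p.smul_mem _ hBvmem
    | zero => rw [map_zero]; exact p.zero_mem
    | add x y _ _ hx hy => rw [map_add]; exact p.add_mem hx hy
    | smul c x _ hx => rw [map_smul]; exact p.smul_mem _ hx
  have hA'_p : ∀ w ∈ p, A' w ∈ p := by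
    intro w hw
    induction hw using Submodule.span_induction with
    | mem x hx =>
      rcases hx with rfl | rfl
      · rw [hA'v]; exact p.smul_mem _ hvmem
      · rw [hA'B, hAv, map_smul]
        exact p.smul_mem _ hBvmem
    | zero => rw [map_zero]; exact p.zero_mem
    | add x y _ _ hx hy => rw [map_add]; exact p.add_mem hx hy
    | smul c x _ hx => rw [map_smul]; exact p.smul_mem _ hx
  have hB_p : ∀ w ∈ p, B w ∈ p := by
    intro w hw
    induction hw using Submodule.span_induction with
    | mem x hx =>
      rcases hx with rfl | rfl
      · exact hBvmem
      · rw [hBB, hAv, map_smul, hAv, smul_smul]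
        exact p.smul_mem _ hvmem
    | zero => rw [map_zero]; exact p.zero_mem
    | add x y _ _ hx hy => rw [map_add]; exact p.add_mem hx hy
    | smul c x _ hx => rw [map_smul]; exact p.smul_mem _ hx
  have haa : ∀ i : ZMod (2 * 2), ∀ w ∈ p, V.ρ (QuaternionGroup.a i) w ∈ p := by
    intro i w hw
    have h : QuaternionGroup.a i = 1 ∨ QuaternionGroup.a i = QuaternionGroup.a 1 ∨
        QuaternionGroup.a i = QuaternionGroup.a 1 * QuaternionGroup.a 1 ∨
        QuaternionGroup.a i = QuaternionGroup.a 1 * QuaternionGroup.a 1 * QuaternionGroup.a 1 := by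
      revert i; decide
    rcases h with h | h | h | h <;> rw [h]
    · rw [map_one]; exact hw
    · exact hA_p w hw
    · rw [map_mul]
      exact hA_p _ (hA_p w hw)
    · rw [map_mul, map_mul]
      exact hA_p _ (hA_p _ (hA_p w hw))
  have hall : ∀ g : Q8, ∀ w ∈ p, V.ρ g w ∈ p := by
    intro g w hw
    rcases g with i | i
    · exact haa i w hw
    · have h : QuaternionGroup.xa i = QuaternionGroup.xa 0 * QuaternionGroup.a i := by
        rw [xa_mul_a, zero_add]
      rw [h, map_mul]
      exact hB_p _ (haa i w hw)
  have htop := invariant_eq_top V p hall (by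
    intro h
    rw [hp, Submodule.span_eq_bot] at h
    exact hvne (h v (Set.mem_insert _ _)))
  have hle : Module.finrank ℂ V ≤ 2 := by
    classical
    rw [← finrank_top ℂ V, ← htop, hp]
    have hset : ({v, B v} : Set V) = (({v, B v} : Finset V) : Set V) := by simp
    rw [hset]
    exact le_trans (finrank_span_finset_le_card _)
      (le_trans (Finset.card_insert_le _ _) (by simp))
  omega

theorem q8_ker_bot (V : FDRep ℂ Q8) [Simple V] (hd : 1 < Module.finrank ℂ V) :
    repKer Q8 V = ⊥ := by
  have hz := q8_rho_not_one V hd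
  ext g
  rw [Subgroup.mem_bot, mem_repKer_iff]
  constructor
  · intro h
    rcases g with i | i
    · have hcase : ∀ i : ZMod (2 * 2), i = 0 ∨ i + i = 2 ∨ i = 2 := by decide
      rcases hcase i with rfl | hc | rfl
      · rw [← one_def]
      · exfalso
        apply hz
        have : QuaternionGroup.a (2 : ZMod (2 * 2)) =
            QuaternionGroup.a i * QuaternionGroup.a i := by
          rw [a_mul_a, hc]
        rw [this, map_mul, h, one_mul]
      · exact absurd h hz
    · exfalso
      apply hz
      have : QuaternionGroup.a (2 : ZMod (2 * 2)) =
          QuaternionGroup.xa i * QuaternionGroup.xa i := by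
        rw [xa_mul_xa]
        congr 1
        push_cast
        ring
      rw [this, map_mul, h, one_mul]
  · rintro rfl
    exact map_one _

theorem q8_cod (V : FDRep ℂ Q8) (hs : Simple V) (hd : 1 < Module.finrank ℂ V) :
    cod Q8 V = 4 := by
  unfold cod
  rw [q8_ker_bot V hd, q8_finrank_eq_two V hd, Subgroup.index_bot,
    Nat.card_eq_fintype_card, QuaternionGroup.card]

theorem ncodSet_q8 : ncodSet Q8 = {4} := by
  ext c
  constructor
  · rintro ⟨V, hs, hd, rfl⟩
    exact q8_cod V hs hd
  · rintro rfl
    refine ⟨qV 2 1, qV_simple 2 1 (by decide), by rw [qV_finrank]; norm_num, ?_⟩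
    rw [cod_qV_one]

end Q8b


end Aux2

/-- for the generalized quaternion group of order `2^k` (`k ≥ 3`),
the set of nonlinear irreducible character codegrees is a singleton iff `k = 3`. -/
theorem ncodSet_quaternion_singleton_iff
    (k : ℕ) (hk : 3 ≤ k) :
    (∃ c : ℕ, ncodSet (QuaternionGroup (2 ^ (k - 2))) = {c}) ↔ k = 3 := by

  constructor
  · rintro ⟨c, hc⟩
    by_contra hk3
    have hk4 : 4 ≤ k := by omega
    set n := 2 ^ (k - 2) with hn
    have hn4 : 4 ≤ n := by
      calc (4:ℕ) = 2 ^ 2 := by norm_num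
        _ ≤ 2 ^ (k - 2) := Nat.pow_le_pow_right (by norm_num) (by omega)
    haveI : NeZero n := ⟨by omega⟩
    have h1 : (1 : ZMod (2 * n)) + 1 ≠ 0 := by
      have hcast : (1 : ZMod (2 * n)) + 1 = ((2 : ℕ) : ZMod (2 * n)) := by push_cast; ring
      rw [hcast, ne_eq, ZMod.natCast_eq_zero_iff]
      intro hdvd
      have := Nat.le_of_dvd (by norm_num) hdvd
      omega
    have h2 : (2 : ZMod (2 * n)) + 2 ≠ 0 := by
      have hcast : (2 : ZMod (2 * n)) + 2 = ((4 : ℕ) : ZMod (2 * n)) := by push_cast; ring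
      rw [hcast, ne_eq, ZMod.natCast_eq_zero_iff]
      intro hdvd
      have := Nat.le_of_dvd (by norm_num) hdvd
      omega
    have hm1 := twoN_mem_ncodSet n h1
    have hm2 := n_mem_ncodSet n h2
    rw [hc] at hm1 hm2
    rw [Set.mem_singleton_iff] at hm1 hm2
    omega
  · rintro rfl
    refine ⟨4, ?_⟩
    have h : (2:ℕ) ^ (3 - 2) = 2 := by norm_num
    rw [h]
    exact ncodSet_q8
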